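/- Let H be a real Hilbert space, I = {1,...,n}, μ > 0, and for each i ∈ I let λ_i > 0 with Σ_{i∈I} λ_i = 1 and let A_i : H ⇉ H be maximally monotone and paramonotone. Then R_μ(A, λ) is paramonotone. -/
import Mathlib


open RealInnerProductSpace

namespace SVP

variable {H : Type*} [NormedAddCommGroup H] [InnerProductSpace ℝ H]

/-- Inverse of a set-valued mapping: `x ∈ inv A u ↔ u ∈ A x`. -/
def inv (A : H → Set H) : H → Set H := fun u => {x | u ∈ A x}

/-- Pointwise (Minkowski) sum of two set-valued mappings. -/
def add (A B : H → Set H) : H → Set H := fun x => {w | ∃ u ∈ A x, ∃ v ∈ B x, w = u + v}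

/-- Pointwise difference of two set-valued mappings. -/
def sub (A B : H → Set H) : H → Set H := fun x => {w | ∃ u ∈ A x, ∃ v ∈ B x, w = u - v}

/-- Pointwise scalar multiple of a set-valued mapping. -/
def smul (c : ℝ) (A : H → Set H) : H → Set H := fun x => (fun u => c • u) '' A x

/-- The identity as a set-valued mapping. -/
def id' : H → Set H := fun x => {x}

/-- Composition of set-valued mappings: `(comp A B) x = ⋃ y ∈ B x, A y`. -/
def comp (A B : H → Set H) : H → Set H := fun x => ⋃ y ∈ B x, A y

/-- Weighted pointwise (Minkowski) combination `Σ_i lam i • (B i)`. -/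
def lcomb {n : ℕ} (lam : Fin n → ℝ) (B : Fin n → H → Set H) : H → Set H :=
  fun x => {u | ∃ v : Fin n → H, (∀ i, v i ∈ B i x) ∧ u = ∑ i, lam i • v i}

/-- The `λ`-weighted resolvent average with parameter `μ`:
`R_μ(A, λ) = (Σ_i λ_i (A_i + μ⁻¹ Id)⁻¹)⁻¹ − μ⁻¹ Id`. -/
def resAvg {n : ℕ} (μ : ℝ) (lam : Fin n → ℝ) (A : Fin n → H → Set H) : H → Set H :=
  sub (inv (lcomb lam (fun i => inv (add (A i) (smul μ⁻¹ id'))))) (smul μ⁻¹ id')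

/-- Monotonicity of a set-valued mapping. -/
def IsMonotone (A : H → Set H) : Prop :=
  ∀ ⦃x y u v : H⦄, u ∈ A x → v ∈ A y → 0 ≤ ⟪x - y, u - v⟫

/-- Maximal monotonicity: the graph is not properly contained in the graph of
another monotone mapping. -/
def IsMaxMonotone (A : H → Set H) : Prop :=
  IsMonotone A ∧ ∀ B : H → Set H, IsMonotone B → (∀ x, A x ⊆ B x) → ∀ x, B x ⊆ A x

/-- Domain of a set-valued mapping. -/
def dom (A : H → Set H) : Set H := {x | (A x).Nonempty}

/-- Range of a set-valued mapping. -/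
def ran (A : H → Set H) : Set H := {u | ∃ x, u ∈ A x}

/-- Graph of a set-valued mapping. -/
def graph (A : H → Set H) : Set (H × H) := {p | p.2 ∈ A p.1}

end SVP

variable {H : Type*} [NormedAddCommGroup H] [InnerProductSpace ℝ H] [CompleteSpace H]

/-- A monotone mapping `A` is paramonotone if whenever `(x, v), (y, u) ∈ gra A`
and `⟪x − y, v − u⟫ = 0`, then also `(x, u), (y, v) ∈ gra A`. -/
def Paramonotone (A : H → Set H) : Prop :=
  ∀ ⦃x y v u : H⦄, v ∈ A x → u ∈ A y → ⟪x - y, v - u⟫ = 0 → u ∈ A x ∧ v ∈ A y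

lemma mem_resAvg {n : ℕ} (μ : ℝ) (lam : Fin n → ℝ) (A : Fin n → H → Set H)
    (w x : H) :
    w ∈ SVP.resAvg μ lam A x ↔ ∃ p : Fin n → H,
      (∀ i, (w + μ⁻¹ • x) - μ⁻¹ • p i ∈ A i (p i)) ∧ x = ∑ i, lam i • p i := by
  simp only [SVP.resAvg, SVP.sub, SVP.inv, SVP.add, SVP.smul, SVP.id', SVP.lcomb,
    Set.mem_setOf_eq, Set.image_singleton, Set.mem_singleton_iff]
  constructor
  · rintro ⟨u, ⟨p, hp, hx⟩, v, rfl, rfl⟩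
    refine ⟨p, fun i => ?_, hx⟩
    obtain ⟨a, ha, b, rfl, hab⟩ := hp i
    have : u - μ⁻¹ • p i = a := by rw [hab]; abel
    rw [show u - μ⁻¹ • x + μ⁻¹ • x - μ⁻¹ • p i = u - μ⁻¹ • p i by abel, this]
    exact ha
  · rintro ⟨p, hp, hx⟩
    refine ⟨w + μ⁻¹ • x, ⟨p, fun i => ⟨_, hp i, μ⁻¹ • p i, rfl, by abel⟩, hx⟩, μ⁻¹ • x, rfl, by abel⟩

/-- Paramonotonicity is recessive: if every `Aᵢ` is maximally monotone and
paramonotone, then `R_μ(A, λ)` is paramonotone. -/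
theorem stmt17 {n : ℕ} (hn : 0 < n) {μ : ℝ} (hμ : 0 < μ) (lam : Fin n → ℝ)
    (hpos : ∀ i, 0 < lam i) (hsum : ∑ i, lam i = 1) (A : Fin n → H → Set H)
    (hA : ∀ i, SVP.IsMaxMonotone (A i)) (hpara : ∀ i, Paramonotone (A i)) :
    Paramonotone (SVP.resAvg μ lam A) := by
  intro x y v u hv hu hinner
  obtain ⟨p, hp, hx⟩ := (mem_resAvg μ lam A v x).1 hv
  obtain ⟨q, hq, hy⟩ := (mem_resAvg μ lam A u y).1 hu
  set c : H := (v + μ⁻¹ • x) - (u + μ⁻¹ • y) with hc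
  set d : Fin n → H := fun i => p i - q i with hd
  set m : H := x - y with hmdef
  have hinvpos : (0:ℝ) < μ⁻¹ := inv_pos.2 hμ
  -- m = ∑ lam i • d i
  have hm : ∑ i, lam i • d i = m := by
    simp only [hd, smul_sub, Finset.sum_sub_distrib, ← hx, ← hy, hmdef]
  -- the second slot of the monotonicity inner product
  have harg : ∀ i, ((v + μ⁻¹ • x) - μ⁻¹ • p i) - ((u + μ⁻¹ • y) - μ⁻¹ • q i)
      = c - μ⁻¹ • d i := by
    intro i; simp only [hc, hd, smul_sub]; abel
  have hterm_nonneg : ∀ i, 0 ≤ ⟪d i, c - μ⁻¹ • d i⟫ := by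
    intro i
    have h := (hA i).1 (hp i) (hq i)
    rwa [harg i] at h
  -- key sums
  have hdc : ∑ i, lam i * ⟪d i, c⟫ = ⟪m, c⟫ := by
    rw [← hm, sum_inner]
    simp [real_inner_smul_left]
  have hdm : ∑ i, lam i * ⟪d i, m⟫ = ⟪m, m⟫ := by
    rw [← hm, sum_inner]
    simp [real_inner_smul_left]
  have hmc : ⟪m, c⟫ = μ⁻¹ * ⟪m, m⟫ := by
    have hce : c = (v - u) + μ⁻¹ • m := by simp only [hc, hmdef, smul_sub]; abel
    rw [hce, inner_add_right, real_inner_smul_right, hmdef]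
    rw [hinner]; ring
  set Q : ℝ := ∑ i, lam i * ⟪d i, d i⟫ with hQ
  have hS1 : ∑ i, lam i * ⟪d i, c - μ⁻¹ • d i⟫ = μ⁻¹ * (⟪m, m⟫ - Q) := by
    have : ∀ i, lam i * ⟪d i, c - μ⁻¹ • d i⟫
        = lam i * ⟪d i, c⟫ - μ⁻¹ * (lam i * ⟪d i, d i⟫) := by
      intro i; rw [inner_sub_right, real_inner_smul_right]; ring
    rw [Finset.sum_congr rfl (fun i _ => this i), Finset.sum_sub_distrib, hdc,
      ← Finset.mul_sum, hmc, ← hQ]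
    ring
  have hS2 : ∑ i, lam i * ⟪d i - m, d i - m⟫ = Q - ⟪m, m⟫ := by
    have : ∀ i, lam i * ⟪d i - m, d i - m⟫
        = lam i * ⟪d i, d i⟫ - 2 * (lam i * ⟪d i, m⟫) + lam i * ⟪m, m⟫ := by
      intro i
      rw [inner_sub_sub_self, real_inner_comm m (d i)]
      push_cast
      ring
    rw [Finset.sum_congr rfl (fun i _ => this i)]
    rw [Finset.sum_add_distrib, Finset.sum_sub_distrib, ← Finset.mul_sum, hdm,
      ← Finset.sum_mul, hsum, ← hQ]
    ring
  have hS2nonneg : 0 ≤ ∑ i, lam i * ⟪d i - m, d i - m⟫ :=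
    Finset.sum_nonneg fun i _ => mul_nonneg (hpos i).le real_inner_self_nonneg
  have hS1nonneg : 0 ≤ ∑ i, lam i * ⟪d i, c - μ⁻¹ • d i⟫ :=
    Finset.sum_nonneg fun i _ => mul_nonneg (hpos i).le (hterm_nonneg i)
  have hQm : Q - ⟪m, m⟫ = 0 := by
    rw [hS1] at hS1nonneg
    rw [hS2] at hS2nonneg
    nlinarith
  -- each Jensen term vanishes: d i = m
  have hdim : ∀ i, d i = m := by
    have hz : ∑ i, lam i * ⟪d i - m, d i - m⟫ = 0 := by rw [hS2, hQm]
    intro i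
    have := (Finset.sum_eq_zero_iff_of_nonneg
      (fun i _ => mul_nonneg (hpos i).le real_inner_self_nonneg)).1 hz i (Finset.mem_univ i)
    have h0 : ⟪d i - m, d i - m⟫ = (0:ℝ) := by
      rcases mul_eq_zero.1 this with h | h
      · exact absurd h (ne_of_gt (hpos i))
      · exact h
    have := inner_self_eq_zero.1 h0
    exact sub_eq_zero.1 this
  -- each monotonicity term vanishes
  have hterm0 : ∀ i, ⟪d i, c - μ⁻¹ • d i⟫ = 0 := by
    have hz : ∑ i, lam i * ⟪d i, c - μ⁻¹ • d i⟫ = 0 := by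
      rw [hS1]
      have h0 : ⟪m, m⟫ - Q = 0 := by linarith
      rw [h0, mul_zero]
    intro i
    have := (Finset.sum_eq_zero_iff_of_nonneg
      (fun i _ => mul_nonneg (hpos i).le (hterm_nonneg i))).1 hz i (Finset.mem_univ i)
    rcases mul_eq_zero.1 this with h | h
    · exact absurd h (ne_of_gt (hpos i))
    · exact h
  -- apply paramonotonicity of each A i
  have hswap := fun i => (hpara i) (hp i) (hq i) (by rw [harg i]; exact hterm0 i)
  constructor
  · -- u ∈ R x, witness p
    refine (mem_resAvg μ lam A u x).2 ⟨p, fun i => ?_, hx⟩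
    have h1 := (hswap i).1
    -- (u + μ⁻¹ y) - μ⁻¹ q i ∈ A i (p i); rewrite using q i = p i - m
    have hqe : q i = p i - m := by
      have h := hdim i
      simp only [hd] at h
      rw [← h]; abel
    rw [hqe, smul_sub, hmdef, smul_sub] at h1
    have e : (u + μ⁻¹ • x) - μ⁻¹ • p i
        = u + μ⁻¹ • y - (μ⁻¹ • p i - (μ⁻¹ • x - μ⁻¹ • y)) := by abel
    rw [e]; exact h1
  · -- v ∈ R y, witness q
    refine (mem_resAvg μ lam A v y).2 ⟨q, fun i => ?_, hy⟩
    have h2 := (hswap i).2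
    have hpe : p i = q i + m := by
      have h := hdim i
      simp only [hd] at h
      rw [← h]; abel
    rw [hpe, smul_add, hmdef, smul_sub] at h2
    have e : (v + μ⁻¹ • y) - μ⁻¹ • q i
        = v + μ⁻¹ • x - (μ⁻¹ • q i + (μ⁻¹ • x - μ⁻¹ • y)) := by abel
    rw [e]; exact h2
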